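/- Let p be an odd prime and b, c, B, C integers with D = B^2 - 4C, d = b^2 - 4c, δ = 4C - 2bB + 4c. If B - b ≢ 0 (mod p) and the polynomials x^2 + bx + c and x^2 + Bx + C have no common root mod p, then ∑_{x=0}^{p-1} ((x^2+bx+c)(x^2+Bx+C)/p) = -1 + ∑_{x=0}^{p-1} (x(Dx^2 + δx + d)/p). -/

import Mathlib

open Finset

variable {F : Type*} [Field F] [Fintype F] [DecidableEq F]

lemma quad_card (hF : ringChar F ≠ 2) (a A₁ A₀ : F) (ha : a ≠ 0) :
    ((univ.filter fun x : F => a * x ^ 2 + A₁ * x + A₀ = 0).card : ℤ) =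
      quadraticChar F (A₁ ^ 2 - 4 * a * A₀) + 1 := by
  have h2 : (2 : F) ≠ 0 := Ring.two_ne_zero hF
  have h2a : 2 * a ≠ 0 := mul_ne_zero h2 ha
  rw [← quadraticChar_card_sqrts hF]
  congr 1
  rw [Set.toFinset_setOf]
  refine Finset.card_nbij' (fun x => 2 * a * x + A₁) (fun y => (y - A₁) / (2 * a))
    ?_ ?_ ?_ ?_
  · intro x hx
    simp only [mem_coe, mem_filter, mem_univ, true_and] at hx ⊢
    linear_combination (4 * a) * hx
  · intro y hy
    simp only [mem_coe, mem_filter, mem_univ, true_and] at hy ⊢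
    field_simp
    linear_combination hy
  · intro x _; field_simp; ring
  · intro y _; field_simp; ring

lemma williams_core (hF : ringChar F ≠ 2) (b c B C : F) (hBb : B - b ≠ 0)
    (hroots : ∀ x : F, ¬ (x ^ 2 + b * x + c = 0 ∧ x ^ 2 + B * x + C = 0)) :
    ∑ x : F, quadraticChar F ((x ^ 2 + b * x + c) * (x ^ 2 + B * x + C)) =
      -1 + ∑ x : F, quadraticChar F (x * ((B ^ 2 - 4 * C) * x ^ 2 +
        (4 * C - 2 * b * B + 4 * c) * x + (b ^ 2 - 4 * c))) := by
  set χ := quadraticChar F with hχ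
  -- no common root rephrased
  have hnoc : ∀ x : F, x ^ 2 + b * x + c = 0 → (B - b) * x + (C - c) ≠ 0 := by
    intro x hf hL
    exact hroots x ⟨hf, by linear_combination hf + hL⟩
  -- Step A: restrict to nonzero f and rewrite the character value
  have stepA : ∑ x : F, χ ((x ^ 2 + b * x + c) * (x ^ 2 + B * x + C)) =
      ∑ x ∈ univ.filter fun x : F => x ^ 2 + b * x + c ≠ 0,
        χ (1 + ((B - b) * x + (C - c)) / (x ^ 2 + b * x + c)) := by
    have h1 : ∑ x : F, χ ((x ^ 2 + b * x + c) * (x ^ 2 + B * x + C)) =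
        ∑ x ∈ univ.filter fun x : F => x ^ 2 + b * x + c ≠ 0,
          χ ((x ^ 2 + b * x + c) * (x ^ 2 + B * x + C)) := by
      refine (Finset.sum_filter_of_ne fun x _ hne => ?_).symm
      intro hf0
      rw [hf0, zero_mul, hχ, quadraticChar_zero] at hne
      exact hne rfl
    rw [h1]
    refine Finset.sum_congr rfl fun x hx => ?_
    have hf : x ^ 2 + b * x + c ≠ 0 := (mem_filter.mp hx).2
    have key : (x ^ 2 + b * x + c) * (x ^ 2 + B * x + C) =
        (x ^ 2 + b * x + c) ^ 2 *
          (1 + ((B - b) * x + (C - c)) / (x ^ 2 + b * x + c)) := by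
      rw [one_add_div hf]; field_simp; ring
    rw [key, hχ, map_mul, quadraticChar_sq_one' hf, one_mul]
  set s₀ := univ.filter fun x : F => x ^ 2 + b * x + c ≠ 0 with hs₀
  set T : F → F := fun x => ((B - b) * x + (C - c)) / (x ^ 2 + b * x + c) with hT
  have stepB : ∑ x ∈ s₀, χ (1 + T x) =
      ∑ j : F, (((s₀.filter fun x => T x = j).card : ℤ)) * χ (1 + j) := by
    rw [← Finset.sum_fiberwise' s₀ T (fun j => χ (1 + j))]
    exact Finset.sum_congr rfl fun j _ => by rw [Finset.sum_const, nsmul_eq_mul]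
  have hfiber0 : (s₀.filter fun x => T x = 0) = {(c - C) / (B - b)} := by
    ext x
    simp only [hs₀, hT, mem_filter, mem_univ, true_and, mem_singleton]
    constructor
    · rintro ⟨hf, ht⟩
      rw [div_eq_zero_iff] at ht
      rcases ht with ht | ht
      · rw [eq_div_iff hBb]; linear_combination ht
      · exact absurd ht hf
    · rintro rfl
      have hL : (B - b) * ((c - C) / (B - b)) + (C - c) = 0 := by field_simp; ring
      have hf : ((c - C) / (B - b)) ^ 2 + b * ((c - C) / (B - b)) + c ≠ 0 :=
        fun h0 => hnoc _ h0 hL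
      exact ⟨hf, by rw [hL, zero_div]⟩
  have hfiberj : ∀ j : F, j ≠ 0 →
      (((s₀.filter fun x => T x = j).card : ℤ)) =
        χ ((j * b - (B - b)) ^ 2 - 4 * j * (j * c - (C - c))) + 1 := by
    intro j hj
    have hset : (s₀.filter fun x => T x = j) =
        univ.filter fun x : F =>
          j * x ^ 2 + (j * b - (B - b)) * x + (j * c - (C - c)) = 0 := by
      ext x
      simp only [hs₀, hT, mem_filter, mem_univ, true_and]
      constructor
      · rintro ⟨hf, ht⟩
        rw [div_eq_iff hf] at ht
        linear_combination -ht
      · intro hq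
        have hf : x ^ 2 + b * x + c ≠ 0 := fun h0 =>
          hnoc x h0 (by linear_combination j * h0 - hq)
        refine ⟨hf, ?_⟩
        rw [div_eq_iff hf]
        linear_combination -hq
    rw [hset, hχ]
    exact quad_card hF j _ _ hj
  have herase : ∀ j ∈ univ.erase (0 : F),
      (((s₀.filter fun x => T x = j).card : ℤ)) * χ (1 + j) =
        χ (((j * b - (B - b)) ^ 2 - 4 * j * (j * c - (C - c))) * (1 + j)) + χ (1 + j) := by
    intro j hjm
    rw [hfiberj j (Finset.mem_erase.mp hjm).1, add_mul, one_mul, ← map_mul]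
  have hsum1 : ∑ j ∈ univ.erase (0 : F), χ (1 + j) = -1 := by
    have h0 : χ (1 + 0) + ∑ j ∈ univ.erase (0:F), χ (1 + j) = ∑ j : F, χ (1 + j) :=
      Finset.add_sum_erase univ (fun j => χ (1 + j)) (mem_univ 0)
    have hall : ∑ j : F, χ (1 + j) = 0 := by
      have he := Fintype.sum_equiv (Equiv.addLeft (1 : F)) (fun j : F => χ (1 + j))
        (fun u => χ u) (fun j => rfl)
      rw [he, hχ]; exact quadraticChar_sum_zero hF
    have h1 : χ (1 + 0) = 1 := by rw [add_zero]; exact map_one χ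
    rw [hall, h1] at h0
    linarith
  have hsum2 : ∑ j ∈ univ.erase (0 : F),
        χ (((j * b - (B - b)) ^ 2 - 4 * j * (j * c - (C - c))) * (1 + j)) =
      (∑ j : F, χ (((j * b - (B - b)) ^ 2 - 4 * j * (j * c - (C - c))) * (1 + j))) - 1 := by
    have h0 := Finset.add_sum_erase univ
      (fun j : F => χ (((j * b - (B - b)) ^ 2 - 4 * j * (j * c - (C - c))) * (1 + j)))
      (mem_univ (0 : F))
    have h1 : χ (((0 * b - (B - b)) ^ 2 - 4 * 0 * (0 * c - (C - c))) * (1 + 0)) = 1 := by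
      have he : ((0 * b - (B - b)) ^ 2 - 4 * 0 * (0 * c - (C - c))) * (1 + 0) = (B - b) ^ 2 := by
        ring
      rw [he, hχ]; exact quadraticChar_sq_one' hBb
    simp only [h1] at h0
    linarith
  have hshift : ∑ j : F, χ (((j * b - (B - b)) ^ 2 - 4 * j * (j * c - (C - c))) * (1 + j)) =
      ∑ s : F, χ (s * ((b ^ 2 - 4 * c) * s ^ 2 + (4 * C - 2 * b * B + 4 * c) * s
        + (B ^ 2 - 4 * C))) := by
    refine Fintype.sum_equiv (Equiv.addLeft (1 : F)) _ _ fun j => ?_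
    have he : ((j * b - (B - b)) ^ 2 - 4 * j * (j * c - (C - c))) * (1 + j) =
        (1 + j) * ((b ^ 2 - 4 * c) * (1 + j) ^ 2 + (4 * C - 2 * b * B + 4 * c) * (1 + j)
          + (B ^ 2 - 4 * C)) := by ring
    rw [he]
    rfl
  have hinv : ∑ s : F, χ (s * ((b ^ 2 - 4 * c) * s ^ 2 + (4 * C - 2 * b * B + 4 * c) * s
        + (B ^ 2 - 4 * C))) =
      ∑ u : F, χ (u * ((B ^ 2 - 4 * C) * u ^ 2 + (4 * C - 2 * b * B + 4 * c) * u
        + (b ^ 2 - 4 * c))) := by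
    refine Fintype.sum_bijective (fun s : F => s⁻¹)
      (Function.Involutive.bijective fun s => inv_inv s) _ _ fun s => ?_
    rcases eq_or_ne s 0 with rfl | hs
    · simp
    · have key : s * ((b ^ 2 - 4 * c) * s ^ 2 + (4 * C - 2 * b * B + 4 * c) * s
          + (B ^ 2 - 4 * C)) =
          (s ^ 2) ^ 2 * (s⁻¹ * ((B ^ 2 - 4 * C) * s⁻¹ ^ 2 + (4 * C - 2 * b * B + 4 * c) * s⁻¹
            + (b ^ 2 - 4 * c))) := by
        field_simp
        ring
      rw [key, hχ, map_mul, quadraticChar_sq_one' (pow_ne_zero 2 hs), one_mul]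
  rw [stepA, stepB,
    ← Finset.add_sum_erase univ
      (fun j : F => (((s₀.filter fun x => T x = j).card : ℤ)) * χ (1 + j)) (mem_univ (0 : F)),
    hfiber0, Finset.sum_congr rfl herase, Finset.sum_add_distrib, hsum1, hsum2, hshift, hinv]
  simp only [Finset.card_singleton, Nat.cast_one, one_mul, add_zero, map_one]
  ring

theorem williams_transform (p : ℕ) [Fact p.Prime] (hodd : Odd p)
    (b c B C : ℤ)
    (hBb : ¬ (p : ℤ) ∣ (B - b))
    (hroots : ∀ x : ZMod p,
      ¬ (x ^ 2 + (b : ZMod p) * x + (c : ZMod p) = 0 ∧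
         x ^ 2 + (B : ZMod p) * x + (C : ZMod p) = 0)) :
    ∑ x ∈ Finset.range p,
      legendreSym p (((x : ℤ) ^ 2 + b * x + c) * ((x : ℤ) ^ 2 + B * x + C)) =
    -1 + ∑ x ∈ Finset.range p,
      legendreSym p ((x : ℤ) * ((B ^ 2 - 4 * C) * x ^ 2 +
        (4 * C - 2 * b * B + 4 * c) * x + (b ^ 2 - 4 * c))) := by
  have hp : p.Prime := Fact.out
  haveI : NeZero p := ⟨hp.ne_zero⟩
  have hp2 : ringChar (ZMod p) ≠ 2 := by
    rw [ZMod.ringChar_zmod_n]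
    intro h
    rw [h] at hodd
    exact (by norm_num : ¬ Odd 2) hodd
  have hBb' : (B : ZMod p) - (b : ZMod p) ≠ 0 := by
    intro h
    apply hBb
    rw [← ZMod.intCast_zmod_eq_zero_iff_dvd]
    push_cast
    exact h
  have hconv : ∀ G : ZMod p → ℤ,
      ∑ x ∈ Finset.range p, G ((x : ℕ) : ZMod p) = ∑ x : ZMod p, G x := by
    intro G
    refine Finset.sum_nbij' (fun n : ℕ => (n : ZMod p)) (fun y : ZMod p => y.val)
      (fun n _ => mem_univ _) (fun y _ => mem_range.mpr (ZMod.val_lt y))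
      (fun n hn => ZMod.val_cast_of_lt (mem_range.mp hn))
      (fun y _ => ZMod.natCast_zmod_val y) (fun n _ => rfl)
  have lhs_eq : ∑ x ∈ Finset.range p,
      legendreSym p (((x : ℤ) ^ 2 + b * x + c) * ((x : ℤ) ^ 2 + B * x + C)) =
      ∑ x : ZMod p, quadraticChar (ZMod p)
        ((x ^ 2 + (b : ZMod p) * x + (c : ZMod p)) *
         (x ^ 2 + (B : ZMod p) * x + (C : ZMod p))) := by
    rw [← hconv (fun y : ZMod p => quadraticChar (ZMod p)
      ((y ^ 2 + (b : ZMod p) * y + (c : ZMod p)) *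
       (y ^ 2 + (B : ZMod p) * y + (C : ZMod p))))]
    refine Finset.sum_congr rfl fun n _ => ?_
    show quadraticChar (ZMod p) _ = quadraticChar (ZMod p) _
    congr 1
    push_cast
    ring
  have rhs_eq : ∑ x ∈ Finset.range p,
      legendreSym p ((x : ℤ) * ((B ^ 2 - 4 * C) * x ^ 2 +
        (4 * C - 2 * b * B + 4 * c) * x + (b ^ 2 - 4 * c))) =
      ∑ x : ZMod p, quadraticChar (ZMod p)
        (x * (((B : ZMod p) ^ 2 - 4 * C) * x ^ 2 +
          (4 * (C : ZMod p) - 2 * b * B + 4 * c) * x + ((b : ZMod p) ^ 2 - 4 * c))) := by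
    rw [← hconv (fun y : ZMod p => quadraticChar (ZMod p)
      (y * (((B : ZMod p) ^ 2 - 4 * C) * y ^ 2 +
        (4 * (C : ZMod p) - 2 * b * B + 4 * c) * y + ((b : ZMod p) ^ 2 - 4 * c))))]
    refine Finset.sum_congr rfl fun n _ => ?_
    show quadraticChar (ZMod p) _ = quadraticChar (ZMod p) _
    congr 1
    push_cast
    ring
  rw [lhs_eq, rhs_eq]
  exact williams_core hp2 (b : ZMod p) (c : ZMod p) (B : ZMod p) (C : ZMod p) hBb' hroots
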